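/- Any two distinct copyable elements of a commutative †-Frobenius monoid (H, m, u) are orthogonal: if ψ and χ are copyable and ψ ≠ χ, then ⟨ψ, χ⟩ = 0. Consequently the copyable elements form an orthogonal basis of H. -/

import Mathlib

noncomputable section

open scoped TensorProduct ComplexConjugate InnerProductSpace

open scoped TensorProduct ComplexConjugate InnerProductSpace

variable {H : Type*} [NormedAddCommGroup H] [InnerProductSpace ℂ H] [FiniteDimensional ℂ H]

namespace TensorIP

variable (H) in
/-- A basis of `H ⊗ H` built from an orthonormal basis of `H`. -/
def tb : Module.Basis (Fin (Module.finrank ℂ H) × Fin (Module.finrank ℂ H)) ℂ (H ⊗[ℂ] H) :=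
  Module.Basis.tensorProduct (stdOrthonormalBasis ℂ H).toBasis (stdOrthonormalBasis ℂ H).toBasis

variable (H) in
/-- The canonical inner product space structure on `H ⊗ H`, which is determined by
`⟪a ⊗ b, c ⊗ d⟫ = ⟪a,c⟫ * ⟪b,d⟫` (see `TensorIP.inner_tmul` below). -/
def core : InnerProductSpace.Core ℂ (H ⊗[ℂ] H) where
  inner x y := ∑ p, conj ((tb H).repr x p) * ((tb H).repr y p)
  conj_inner_symm x y := by
    simp only [map_sum, map_mul, starRingEnd_self_apply]
    exact Finset.sum_congr rfl fun p _ => by ring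
  re_inner_nonneg x := by
    show 0 ≤ RCLike.re (∑ p, conj ((tb H).repr x p) * ((tb H).repr x p))
    have h : ∀ p : Fin (Module.finrank ℂ H) × Fin (Module.finrank ℂ H),
        conj ((tb H).repr x p) * ((tb H).repr x p)
          = ((Complex.normSq ((tb H).repr x p) : ℝ) : ℂ) := fun p => by
      rw [mul_comm, Complex.mul_conj]
    simp only [h]
    rw [map_sum]
    refine Finset.sum_nonneg fun p _ => ?_
    simp [Complex.normSq_nonneg]
  add_left x y z := by
    simp only [map_add, Finsupp.add_apply]
    rw [← Finset.sum_add_distrib]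
    exact Finset.sum_congr rfl fun p _ => by ring
  smul_left x y r := by
    simp only [map_smul, Finsupp.smul_apply, smul_eq_mul, map_mul, Finset.mul_sum]
    exact Finset.sum_congr rfl fun p _ => by ring
  definite x hx := by
    have hx' : ∑ p, conj ((tb H).repr x p) * ((tb H).repr x p) = 0 := hx
    have h2 : ∑ p, ((Complex.normSq ((tb H).repr x p) : ℝ) : ℂ) = 0 := by
      rw [← hx']
      exact Finset.sum_congr rfl fun p _ => by rw [mul_comm, Complex.mul_conj]
    have h3 : ∑ p, Complex.normSq ((tb H).repr x p) = 0 := by exact_mod_cast h2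
    have h4 : ∀ p ∈ Finset.univ, Complex.normSq ((tb H).repr x p) = 0 :=
      (Finset.sum_eq_zero_iff_of_nonneg fun p _ => Complex.normSq_nonneg _).mp h3
    have h5 : (tb H).repr x = 0 := by
      ext p
      exact Complex.normSq_eq_zero.mp (h4 p (Finset.mem_univ p))
    simpa using (tb H).repr.map_eq_zero_iff.mp h5

instance : NormedAddCommGroup (H ⊗[ℂ] H) :=
  @InnerProductSpace.Core.toNormedAddCommGroup ℂ (H ⊗[ℂ] H) _ _ _ (core H)

instance : InnerProductSpace ℂ (H ⊗[ℂ] H) := InnerProductSpace.ofCore (core H).toCore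

attribute [-instance] TensorProduct.instInner

theorem inner_tmul (a b c d : H) :
    ⟪a ⊗ₜ[ℂ] b, c ⊗ₜ[ℂ] d⟫_ℂ = ⟪a, c⟫_ℂ * ⟪b, d⟫_ℂ := by
  have key : ∀ (x y : H) (p : Fin (Module.finrank ℂ H) × Fin (Module.finrank ℂ H)),
      (tb H).repr (x ⊗ₜ[ℂ] y) p
        = ⟪(stdOrthonormalBasis ℂ H) p.1, x⟫_ℂ * ⟪(stdOrthonormalBasis ℂ H) p.2, y⟫_ℂ := by
    rintro x y ⟨i, j⟩
    rw [tb, Module.Basis.tensorProduct_repr_tmul_apply, smul_eq_mul,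
      OrthonormalBasis.coe_toBasis_repr_apply, OrthonormalBasis.coe_toBasis_repr_apply,
      OrthonormalBasis.repr_apply_apply, OrthonormalBasis.repr_apply_apply, mul_comm]
  show (∑ p, conj ((tb H).repr (a ⊗ₜ[ℂ] b) p) * ((tb H).repr (c ⊗ₜ[ℂ] d) p)) = _
  simp only [key, map_mul]
  rw [← Finset.univ_product_univ, Finset.sum_product]
  have h : ∀ i j : Fin (Module.finrank ℂ H),
      (conj ⟪(stdOrthonormalBasis ℂ H) i, a⟫_ℂ * conj ⟪(stdOrthonormalBasis ℂ H) j, b⟫_ℂ) *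
        (⟪(stdOrthonormalBasis ℂ H) i, c⟫_ℂ * ⟪(stdOrthonormalBasis ℂ H) j, d⟫_ℂ)
      = (⟪a, (stdOrthonormalBasis ℂ H) i⟫_ℂ * ⟪(stdOrthonormalBasis ℂ H) i, c⟫_ℂ) *
        (⟪b, (stdOrthonormalBasis ℂ H) j⟫_ℂ * ⟪(stdOrthonormalBasis ℂ H) j, d⟫_ℂ) := by
    intro i j
    rw [inner_conj_symm, inner_conj_symm]; ring
  simp only [h]
  rw [← Finset.sum_mul_sum]
  rw [OrthonormalBasis.sum_inner_mul_inner, OrthonormalBasis.sum_inner_mul_inner]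

end TensorIP

/-- `(H, m, u)` is a commutative †-Frobenius monoid: `m` is associative and commutative,
`u 1` is a two-sided unit for `m`, and the Frobenius law
`(m ⊗ id) ∘ (id ⊗ δ) = δ ∘ m` holds, where `δ := m†`. -/
def IsFrobenius (m : H ⊗[ℂ] H →ₗ[ℂ] H) (u : ℂ →ₗ[ℂ] H) : Prop :=
  (m ∘ₗ TensorProduct.map m LinearMap.id
      = m ∘ₗ TensorProduct.map LinearMap.id m ∘ₗ (TensorProduct.assoc ℂ H H H).toLinearMap)
    ∧ (m ∘ₗ (TensorProduct.comm ℂ H H).toLinearMap = m)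
    ∧ (∀ x : H, m (u 1 ⊗ₜ[ℂ] x) = x)
    ∧ (∀ x : H, m (x ⊗ₜ[ℂ] u 1) = x)
    ∧ (TensorProduct.map m LinearMap.id ∘ₗ (TensorProduct.assoc ℂ H H H).symm.toLinearMap
        ∘ₗ TensorProduct.map LinearMap.id (LinearMap.adjoint m)
      = LinearMap.adjoint m ∘ₗ m)

/-- `ψ` is a copyable element: `δ ψ = ψ ⊗ ψ` and `ε ψ = 1`, where `δ := m†`, `ε := u†`. -/
def Copyable (m : H ⊗[ℂ] H →ₗ[ℂ] H) (u : ℂ →ₗ[ℂ] H) (ψ : H) : Prop :=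
  LinearMap.adjoint m ψ = ψ ⊗ₜ[ℂ] ψ ∧ LinearMap.adjoint u ψ = 1


attribute [-instance] TensorProduct.instInner

section Aux

open TensorProduct

/-- Extensionality via inner products against simple tensors. -/
lemma inner_ext_tmul {x y : H ⊗[ℂ] H}
    (h : ∀ a b : H, ⟪x, a ⊗ₜ[ℂ] b⟫_ℂ = ⟪y, a ⊗ₜ[ℂ] b⟫_ℂ) : x = y := by
  apply ext_inner_right ℂ
  intro t
  induction t using TensorProduct.induction_on with
  | zero => simp
  | tmul a b => exact h a b
  | add s t hs ht => simp [inner_add_right, hs, ht]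

/-- The "star" of an element: contraction of `δ(u 1)` against `a`. -/
def sElem (m : H ⊗[ℂ] H →ₗ[ℂ] H) (u : ℂ →ₗ[ℂ] H) (a : H) : H :=
  TensorProduct.rid ℂ H
    ((LinearMap.lTensor H ((innerSL ℂ a).toLinearMap)) (LinearMap.adjoint m (u 1)))

lemma comm_inner (s : H ⊗[ℂ] H) (a b : H) :
    ⟪(TensorProduct.comm ℂ H H) s, a ⊗ₜ[ℂ] b⟫_ℂ = ⟪s, b ⊗ₜ[ℂ] a⟫_ℂ := by
  induction s using TensorProduct.induction_on with
  | zero => simp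
  | tmul c d => simp [TensorIP.inner_tmul, mul_comm]
  | add s t hs ht => simp only [map_add, inner_add_left, hs, ht]

lemma adjoint_m_comm (m : H ⊗[ℂ] H →ₗ[ℂ] H) (u : ℂ →ₗ[ℂ] H)
    (hfrob : IsFrobenius m u) (x : H) :
    (TensorProduct.comm ℂ H H) (LinearMap.adjoint m x) = LinearMap.adjoint m x := by
  obtain ⟨-, hcomm, -, -, -⟩ := hfrob
  apply inner_ext_tmul
  intro a b
  rw [comm_inner, LinearMap.adjoint_inner_left, LinearMap.adjoint_inner_left]
  have h := LinearMap.congr_fun hcomm (a ⊗ₜ[ℂ] b)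
  simp only [LinearMap.comp_apply, LinearEquiv.coe_coe, TensorProduct.comm_tmul] at h
  rw [h]

lemma adjoint_m_eq (m : H ⊗[ℂ] H →ₗ[ℂ] H) (u : ℂ →ₗ[ℂ] H)
    (hfrob : IsFrobenius m u) (x : H) :
    LinearMap.adjoint m x = TensorProduct.map m LinearMap.id
      ((TensorProduct.assoc ℂ H H H).symm (x ⊗ₜ[ℂ] (LinearMap.adjoint m (u 1)))) := by
  obtain ⟨-, -, -, hur, hfr⟩ := hfrob
  have h := LinearMap.congr_fun hfr (x ⊗ₜ[ℂ] u 1)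
  simp only [LinearMap.comp_apply, TensorProduct.map_tmul, LinearMap.id_apply,
    LinearEquiv.coe_coe] at h
  rw [hur] at h
  exact h.symm

lemma key_adjoint (m : H ⊗[ℂ] H →ₗ[ℂ] H) (u : ℂ →ₗ[ℂ] H)
    (hfrob : IsFrobenius m u) (a x y : H) :
    ⟪m (a ⊗ₜ[ℂ] y), x⟫_ℂ = ⟪y, m (x ⊗ₜ[ℂ] sElem m u a)⟫_ℂ := by
  have h1 : ⟪m (a ⊗ₜ[ℂ] y), x⟫_ℂ = ⟪a ⊗ₜ[ℂ] y, LinearMap.adjoint m x⟫_ℂ :=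
    (LinearMap.adjoint_inner_right m _ x).symm
  rw [h1, ← adjoint_m_comm m u hfrob x, adjoint_m_eq m u hfrob x]
  simp only [sElem]
  generalize (LinearMap.adjoint m (u 1)) = E
  induction E using TensorProduct.induction_on with
  | zero => simp
  | tmul e f =>
    simp only [TensorProduct.assoc_symm_tmul, TensorProduct.map_tmul, LinearMap.id_apply,
      TensorProduct.comm_tmul, LinearMap.lTensor_tmul, ContinuousLinearMap.coe_coe,
      innerSL_apply_apply, TensorProduct.rid_tmul, TensorProduct.tmul_smul, map_smul,
      inner_smul_right, TensorIP.inner_tmul]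
  | add s t hs ht =>
    simp only [TensorProduct.tmul_add, map_add, inner_add_right, hs, ht]

/-- A commuting family of endomorphisms has a common eigenvector in every nonzero
invariant subspace. -/
lemma exists_common_eigenvector (T : ℕ → Module.End ℂ H)
    (hT : ∀ i j (x : H), T i (T j x) = T j (T i x)) (n : ℕ) :
    ∀ (U : Submodule ℂ H), U ≠ ⊥ → (∀ (i : ℕ) (x : H), x ∈ U → T i x ∈ U) →
      ∃ v : H, v ∈ U ∧ v ≠ 0 ∧ ∀ i < n, ∃ c : ℂ, T i v = c • v := by
  induction n with
  | zero =>
    intro U hU hinv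
    obtain ⟨v, hvU, hv0⟩ := Submodule.ne_bot_iff U |>.mp hU
    exact ⟨v, hvU, hv0, fun i hi => absurd hi (Nat.not_lt_zero i)⟩
  | succ n ih =>
    intro U hU hinv
    haveI : Nontrivial U := Submodule.nontrivial_iff_ne_bot.mpr hU
    set S : Module.End ℂ U := (T n).restrict (fun x hx => hinv n x hx) with hS
    obtain ⟨μ, hμ⟩ := Module.End.exists_eigenvalue S
    set E : Submodule ℂ U := Module.End.eigenspace S μ with hE
    set U' : Submodule ℂ H := E.map U.subtype with hU'
    have hU'le : U' ≤ U := Submodule.map_subtype_le U E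
    have hU'ne : U' ≠ ⊥ := by
      obtain ⟨y, hyE, hy0⟩ := Submodule.ne_bot_iff E |>.mp hμ
      refine Submodule.ne_bot_iff U' |>.mpr ⟨(y : H), ⟨y, hyE, rfl⟩, ?_⟩
      simpa using hy0
    have hinv' : ∀ (i : ℕ) (x : H), x ∈ U' → T i x ∈ U' := by
      intro i x hx
      obtain ⟨y, hyE, rfl⟩ := hx
      refine ⟨⟨T i (y : H), hinv i _ y.2⟩, ?_, rfl⟩
      have hyE' : y ∈ Module.End.eigenspace S μ := hyE
      show _ ∈ Module.End.eigenspace S μ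
      rw [Module.End.mem_eigenspace_iff] at hyE' ⊢
      apply Subtype.ext
      have hy := congrArg Subtype.val hyE'
      simp only [hS, LinearMap.restrict_apply, Submodule.coe_smul] at hy ⊢
      calc T n (T i (y : H)) = T i (T n (y : H)) := hT n i _
        _ = T i (μ • (y : H)) := by rw [← hy]
        _ = μ • T i (y : H) := map_smul _ _ _
    obtain ⟨v, hvU', hv0, hvc⟩ := ih U' hU'ne hinv'
    refine ⟨v, hU'le hvU', hv0, fun i hi => ?_⟩
    rcases Nat.lt_succ_iff_lt_or_eq.mp hi with hi' | rfl
    · exact hvc i hi'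
    · obtain ⟨y, hyE, rfl⟩ := hvU'
      have hyE' : y ∈ Module.End.eigenspace S μ := hyE
      refine ⟨μ, ?_⟩
      have hy := congrArg Subtype.val (Module.End.mem_eigenspace_iff.mp hyE')
      simpa [hS, LinearMap.restrict_apply, Submodule.coe_smul] using hy

end Aux

/--Distinct copyable elements are orthogonal; consequently the copyable elements form an
orthogonal basis of `H`: pairwise orthogonal, nonzero, and spanning. -/
theorem copyable_orthogonal_basis (m : H ⊗[ℂ] H →ₗ[ℂ] H) (u : ℂ →ₗ[ℂ] H)
    (hfrob : IsFrobenius m u) :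
    (∀ ψ χ : H, Copyable m u ψ → Copyable m u χ → ψ ≠ χ → ⟪ψ, χ⟫_ℂ = 0)
      ∧ (0 : H) ∉ {ψ : H | Copyable m u ψ}
      ∧ Submodule.span ℂ {ψ : H | Copyable m u ψ} = ⊤ := by
  obtain ⟨hassoc, hcomm, hul, hur, hfr⟩ := id hfrob
  have hm_comm : ∀ a b : H, m (a ⊗ₜ[ℂ] b) = m (b ⊗ₜ[ℂ] a) := by
    intro a b
    have h := LinearMap.congr_fun hcomm (b ⊗ₜ[ℂ] a)
    simp only [LinearMap.comp_apply, LinearEquiv.coe_coe, TensorProduct.comm_tmul] at h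
    exact h
  have hne : ∀ ψ : H, Copyable m u ψ → ψ ≠ 0 := by
    rintro ψ ⟨-, hε⟩ h0
    rw [h0, map_zero] at hε
    exact one_ne_zero hε.symm
  have part1 : ∀ ψ χ : H, Copyable m u ψ → Copyable m u χ → ψ ≠ χ → ⟪ψ, χ⟫_ℂ = 0 := by
    intro ψ χ hψ hχ hne'
    obtain ⟨hψδ, hψε⟩ := id hψ
    obtain ⟨hχδ, hχε⟩ := id hχ
    have h1 : LinearMap.adjoint m (m (ψ ⊗ₜ[ℂ] χ)) = m (ψ ⊗ₜ[ℂ] χ) ⊗ₜ[ℂ] χ := by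
      have h := LinearMap.congr_fun hfr (ψ ⊗ₜ[ℂ] χ)
      simp only [LinearMap.comp_apply, TensorProduct.map_tmul, LinearMap.id_apply,
        LinearEquiv.coe_coe, hχδ, TensorProduct.assoc_symm_tmul] at h
      exact h.symm
    have h2 : LinearMap.adjoint m (m (ψ ⊗ₜ[ℂ] χ)) = m (ψ ⊗ₜ[ℂ] χ) ⊗ₜ[ℂ] ψ := by
      have h := LinearMap.congr_fun hfr (χ ⊗ₜ[ℂ] ψ)
      simp only [LinearMap.comp_apply, TensorProduct.map_tmul, LinearMap.id_apply,
        LinearEquiv.coe_coe, hψδ, TensorProduct.assoc_symm_tmul] at h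
      rw [hm_comm ψ χ]
      exact h.symm
    have h3 : m (ψ ⊗ₜ[ℂ] χ) ⊗ₜ[ℂ] (χ - ψ) = 0 := by
      rw [TensorProduct.tmul_sub, ← h1, ← h2, sub_self]
    have h4 : m (ψ ⊗ₜ[ℂ] χ) = 0 := by
      have h5 : ⟪m (ψ ⊗ₜ[ℂ] χ), m (ψ ⊗ₜ[ℂ] χ)⟫_ℂ * ⟪χ - ψ, χ - ψ⟫_ℂ = 0 := by
        rw [← TensorIP.inner_tmul, h3, inner_zero_left]
      rcases mul_eq_zero.mp h5 with h | h
      · exact inner_self_eq_zero.mp h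
      · exact absurd (sub_eq_zero.mp (inner_self_eq_zero.mp h)).symm hne'
    have h6 : ⟪χ, ψ⟫_ℂ * ⟪χ, χ⟫_ℂ = 0 := by
      rw [← TensorIP.inner_tmul, ← hχδ, LinearMap.adjoint_inner_left, h4, inner_zero_right]
    rcases mul_eq_zero.mp h6 with h | h
    · rw [← inner_conj_symm, h, map_zero]
    · exact absurd (inner_self_eq_zero.mp h) (hne χ hχ)
  refine ⟨part1, fun h => hne 0 h rfl, ?_⟩
  set W := Submodule.span ℂ {ψ : H | Copyable m u ψ} with hW
  rw [← Submodule.orthogonal_eq_bot_iff]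
  by_contra hbot
  set n := Module.finrank ℂ H with hn
  set b := Module.finBasis ℂ H with hb
  set bfun : ℕ → H := fun k => if h : k < n then b ⟨k, h⟩ else 0 with hbfun
  set T : ℕ → Module.End ℂ H := fun k => m ∘ₗ (TensorProduct.mk ℂ H H (bfun k)) with hT
  have hT_apply : ∀ k x, T k x = m (bfun k ⊗ₜ[ℂ] x) := fun k x => rfl
  have hmul : ∀ a c x : H, m (a ⊗ₜ[ℂ] m (c ⊗ₜ[ℂ] x)) = m (m (a ⊗ₜ[ℂ] c) ⊗ₜ[ℂ] x) := by
    intro a c x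
    have h := LinearMap.congr_fun hassoc ((a ⊗ₜ[ℂ] c) ⊗ₜ[ℂ] x)
    simp only [LinearMap.comp_apply, TensorProduct.map_tmul, LinearMap.id_apply,
      LinearEquiv.coe_coe, TensorProduct.assoc_tmul] at h
    exact h.symm
  have hTcomm : ∀ i j (x : H), T i (T j x) = T j (T i x) := by
    intro i j x
    rw [hT_apply, hT_apply, hT_apply, hT_apply, hmul, hmul, hm_comm (bfun i) (bfun j)]
  have hWinv : ∀ (a x : H), x ∈ Wᗮ → m (a ⊗ₜ[ℂ] x) ∈ Wᗮ := by
    intro a x hx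
    rw [Submodule.mem_orthogonal] at hx ⊢
    intro w hw
    induction hw using Submodule.span_induction with
    | mem w' hw' =>
      obtain ⟨hwδ, -⟩ := id hw'
      rw [← LinearMap.adjoint_inner_left, hwδ, TensorIP.inner_tmul,
        hx w' (Submodule.subset_span hw'), mul_zero]
    | zero => exact inner_zero_left _
    | add p q hp hq hp' hq' => rw [inner_add_left, hp', hq', add_zero]
    | smul c p hp hp' => rw [inner_smul_left, hp', mul_zero]
  obtain ⟨v, hvU, hv0, hv⟩ := exists_common_eigenvector T hTcomm n Wᗮ hbot
    (fun i x hx => hWinv _ x hx)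
  have hvv : ⟪v, v⟫_ℂ ≠ 0 := inner_self_ne_zero.mpr hv0
  have huniq : ∀ c d : ℂ, c • v = d • v → c = d := by
    intro c d h
    have h' : (c - d) • v = 0 := by rw [sub_smul, h, sub_self]
    rcases smul_eq_zero.mp h' with h'' | h''
    · exact sub_eq_zero.mp h''
    · exact absurd h'' hv0
  have heig : ∀ a : H, ∃ c : ℂ, m (a ⊗ₜ[ℂ] v) = c • v := by
    intro a
    have hbv : ∀ i : Fin n, ∃ c : ℂ, m (b i ⊗ₜ[ℂ] v) = c • v := by
      intro i
      obtain ⟨c, hc⟩ := hv i i.isLt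
      refine ⟨c, ?_⟩
      rw [hT_apply] at hc
      simpa [hbfun, i.isLt] using hc
    choose cf hcf using hbv
    refine ⟨∑ i, b.repr a i * cf i, ?_⟩
    calc m (a ⊗ₜ[ℂ] v) = m ((∑ i, b.repr a i • b i) ⊗ₜ[ℂ] v) := by rw [b.sum_repr a]
      _ = ∑ i, b.repr a i • m (b i ⊗ₜ[ℂ] v) := by
          rw [TensorProduct.sum_tmul]
          simp only [← TensorProduct.smul_tmul', map_sum, map_smul]
      _ = ∑ i, b.repr a i • (cf i • v) := by simp only [hcf]
      _ = (∑ i, b.repr a i * cf i) • v := by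
          rw [Finset.sum_smul]
          simp [smul_smul]
  set lam : H → ℂ := fun a => ⟪v, m (a ⊗ₜ[ℂ] v)⟫_ℂ / ⟪v, v⟫_ℂ with hlamdef
  have hlam : ∀ a, m (a ⊗ₜ[ℂ] v) = lam a • v := by
    intro a
    obtain ⟨c, hc⟩ := heig a
    have hceq : lam a = c := by
      rw [hlamdef]
      simp only []
      rw [hc, inner_smul_right]
      field_simp
    rw [hceq, hc]
  have hlam_u : lam (u 1) = 1 := by
    apply huniq
    rw [← hlam (u 1), hul v, one_smul]
  have hlam_mul : ∀ a c : H, lam (m (a ⊗ₜ[ℂ] c)) = lam a * lam c := by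
    intro a c
    apply huniq
    rw [← hlam (m (a ⊗ₜ[ℂ] c)), ← hmul, hlam c, TensorProduct.tmul_smul, map_smul,
      hlam a, smul_smul, mul_comm (lam c) (lam a)]
  have hlam_s : ∀ a, lam (sElem m u a) = conj (lam a) := by
    intro a
    have e1 : ⟪m (a ⊗ₜ[ℂ] v), v⟫_ℂ = lam (sElem m u a) * ⟪v, v⟫_ℂ := by
      rw [key_adjoint m u hfrob, hm_comm v (sElem m u a), hlam (sElem m u a),
        inner_smul_right]
    have e2 : ⟪m (a ⊗ₜ[ℂ] v), v⟫_ℂ = conj (lam a) * ⟪v, v⟫_ℂ := by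
      rw [hlam a, inner_smul_left]
    exact mul_right_cancel₀ hvv (e1.symm.trans e2)
  have hstar : ∀ a c : H, ⟪v, m (a ⊗ₜ[ℂ] c)⟫_ℂ = lam a * ⟪v, c⟫_ℂ := by
    intro a c
    rw [← inner_conj_symm, key_adjoint m u hfrob, hm_comm v (sElem m u a),
      hlam (sElem m u a), inner_smul_right, map_mul, hlam_s, Complex.conj_conj,
      inner_conj_symm]
  have hvin : ∀ a : H, ⟪v, a⟫_ℂ = lam a * ⟪v, u 1⟫_ℂ := by
    intro a
    have h := hstar a (u 1)
    rw [hur a] at h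
    exact h
  have hd : ⟪v, u 1⟫_ℂ ≠ 0 := by
    intro h0
    exact hvv (by rw [hvin v, h0, mul_zero])
  set χ := (conj ⟪v, u 1⟫_ℂ)⁻¹ • v with hχdef
  have hχinner : ∀ a : H, ⟪χ, a⟫_ℂ = lam a := by
    intro a
    rw [hχdef, inner_smul_left, hvin a, map_inv₀, Complex.conj_conj]
    field_simp
  have hχcopy : Copyable m u χ := by
    constructor
    · apply inner_ext_tmul
      intro a c
      rw [LinearMap.adjoint_inner_left, hχinner, hlam_mul, TensorIP.inner_tmul,
        hχinner, hχinner]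
    · have h1 : ⟪LinearMap.adjoint u χ, (1 : ℂ)⟫_ℂ = ⟪χ, u 1⟫_ℂ :=
        LinearMap.adjoint_inner_left u 1 χ
      rw [hχinner, hlam_u, RCLike.inner_apply, one_mul] at h1
      calc LinearMap.adjoint u χ = conj (conj (LinearMap.adjoint u χ)) := by
            rw [Complex.conj_conj]
        _ = conj 1 := by rw [h1]
        _ = 1 := by simp
  have hχW : χ ∈ W := Submodule.subset_span hχcopy
  have h0 : ⟪χ, v⟫_ℂ = 0 := (Submodule.mem_orthogonal W v).mp hvU χ hχW
  rw [hχinner] at h0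
  exact hvv (by rw [hvin v, h0, zero_mul])
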